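/- Assume m + p = 2 (so that the assumption on σ reads σ > 2). Then a point (X,Y,Z) ∈ ℝ³ with X ≥ 0 and Z ≥ 0 is an equilibrium of the system (PSsyst1) if and only if either (X,Y,Z) = P2 = ((m−1)/(2α(mN−N+2)), 1/(α(mN−N+2)), 0), or (X,Y,Z) = (0, λ, −λ² − (β/α)λ) for some λ ∈ [−β/α, 0] (the critical parabola). -/

import Mathlib

open Real Filter Set Topology

noncomputable def alphaC (m p σ : ℝ) : ℝ := (σ + 2) / (σ * (m - 1) + 2 * (p - 1))

noncomputable def betaC (m p σ : ℝ) : ℝ := (m - p) / (σ * (m - 1) + 2 * (p - 1))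

private lemma aux1 (m a k : ℝ) (ha : a ≠ 0) (hk : k ≠ 0) :
    (m - 1) / (2 * a * k) * ((m - 1) * (1 / (a * k)) - 2 * ((m - 1) / (2 * a * k))) = 0 := by
  field_simp
  ring

private lemma aux2 (m σ n : ℝ) (hσp : σ + 2 ≠ 0) (hm1 : m - 1 ≠ 0) (hs2 : σ - 2 ≠ 0)
    (hkne : m * n - n + 2 ≠ 0) :
    -(1 / ((σ + 2) / ((m - 1) * (σ - 2)) * (m * n - n + 2))) ^ 2
      - 2 * (m - 1) / (σ + 2) * (1 / ((σ + 2) / ((m - 1) * (σ - 2)) * (m * n - n + 2)))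
      + (m - 1) / (2 * ((σ + 2) / ((m - 1) * (σ - 2))) * (m * n - n + 2))
      - n * ((m - 1) / (2 * ((σ + 2) / ((m - 1) * (σ - 2))) * (m * n - n + 2)))
        * (1 / ((σ + 2) / ((m - 1) * (σ - 2)) * (m * n - n + 2))) - 0 = 0 := by
  field_simp
  ring

set_option maxHeartbeats 1000000 in
theorem equilibria_mp_eq_two (m p σ : ℝ) (N : ℕ) (hm : 1 < m) (hp0 : 0 < p) (hp1 : p < 1)
    (hσ : 2 * (1 - p) / (m - 1) < σ) (hN : 1 ≤ N)
    (hmp : m + p = 2) :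
    ∀ X Y Z : ℝ, 0 ≤ X → 0 ≤ Z →
      ((X * ((m - 1) * Y - 2 * X) = 0 ∧
        -Y ^ 2 - betaC m p σ / alphaC m p σ * Y + X - (N : ℝ) * X * Y - Z = 0 ∧
        Z * ((m + p - 2) * Y + (σ - 2) * X) = 0) ↔
      ((X, Y, Z) = ((m - 1) / (2 * alphaC m p σ * (m * (N : ℝ) - (N : ℝ) + 2)),
          1 / (alphaC m p σ * (m * (N : ℝ) - (N : ℝ) + 2)), (0 : ℝ)) ∨
        ∃ l : ℝ, -(betaC m p σ / alphaC m p σ) ≤ l ∧ l ≤ 0 ∧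
          (X, Y, Z) = ((0 : ℝ), l, -l ^ 2 - betaC m p σ / alphaC m p σ * l))) := by
  have hm1 : (0:ℝ) < m - 1 := by linarith
  have hp2 : p = 2 - m := by linarith
  have hσ2 : 2 < σ := by
    have h2 : 2 * (1 - p) / (m - 1) = 2 := by
      rw [hp2]; field_simp; ring
    linarith [h2 ▸ hσ]
  have hσp : (0:ℝ) < σ + 2 := by linarith
  have hL : σ * (m - 1) + 2 * (p - 1) = (m - 1) * (σ - 2) := by rw [hp2]; ring
  have hLpos : 0 < (m - 1) * (σ - 2) := mul_pos hm1 (by linarith)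
  set a := alphaC m p σ with ha_def
  set b := betaC m p σ with hb_def
  set k : ℝ := m * (N:ℝ) - (N:ℝ) + 2 with hk_def
  have hA : a = (σ + 2) / ((m - 1) * (σ - 2)) := by
    rw [ha_def]; unfold alphaC; rw [hL]
  have hB : b = (m - p) / ((m - 1) * (σ - 2)) := by
    rw [hb_def]; unfold betaC; rw [hL]
  clear_value a b
  have hApos : 0 < a := by rw [hA]; positivity
  have hane : a ≠ 0 := ne_of_gt hApos
  have hAid : a * ((m - 1) * (σ - 2)) = σ + 2 := by
    rw [hA]; field_simp [show σ - 2 ≠ 0 by linarith]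
  have hr : b / a = 2 * (m - 1) / (σ + 2) := by
    rw [hA, hB, hp2]
    field_simp [show σ - 2 ≠ 0 by linarith]
    ring
  have hNc : (1:ℝ) ≤ (N:ℝ) := by exact_mod_cast hN
  have hkpos : (0:ℝ) < k := by rw [hk_def]; nlinarith
  clear_value k
  have hkne : k ≠ 0 := ne_of_gt hkpos
  have hAk : a * k ≠ 0 := mul_ne_zero hane hkne
  intro X Y Z hX hZ
  constructor
  · rintro ⟨e1, e2, e3⟩
    rcases eq_or_lt_of_le hX with hX0 | hXpos
    · -- X = 0, parabola case
      right
      rw [hr] at e2 ⊢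
      have e2' : Y * (Y * (σ + 2) + 2 * (m - 1)) = -((σ + 2) * Z) := by
        have := e2
        rw [← hX0] at this
        field_simp at this
        linarith [this]
      refine ⟨Y, ?_, ?_, ?_⟩
      · rw [neg_le, le_div_iff₀ hσp]
        nlinarith [e2', mul_nonneg (le_of_lt hσp) hZ, sq_nonneg (Y*(σ+2)+2*(m-1))]
      · by_contra h
        push_neg at h
        nlinarith [e2', mul_nonneg (le_of_lt hσp) hZ]
      · have hZv : Z = -Y ^ 2 - 2 * (m - 1) / (σ + 2) * Y := by
          rw [← hX0] at e2; linarith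
        rw [Prod.mk.injEq, Prod.mk.injEq]
        exact ⟨hX0.symm, rfl, hZv⟩
    · -- X > 0
      left
      have hXne : X ≠ 0 := ne_of_gt hXpos
      have e1' : (m - 1) * Y = 2 * X := by
        rcases mul_eq_zero.mp e1 with h | h
        · exact absurd h hXne
        · linarith
      have hYpos : 0 < Y := by
        by_contra h
        push_neg at h
        linarith [mul_nonpos_of_nonneg_of_nonpos (le_of_lt hm1) h, e1', hXpos]
      have hZ0 : Z = 0 := by
        have h3 : (m + p - 2) * Y + (σ - 2) * X = (σ - 2) * X := by
          rw [hmp]; ring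
        rw [h3] at e3
        rcases mul_eq_zero.mp e3 with h | h
        · exact h
        · exact absurd h (ne_of_gt (mul_pos (by linarith) hXpos))
      have hkey : Y * k * (σ + 2) = (m - 1) * (σ - 2) := by
        rw [hr, hZ0] at e2
        field_simp at e2
        have hX' : X = (m - 1) * Y / 2 := by linarith
        rw [hX'] at e2
        rw [hk_def]
        have e5 : Y * (Y * (m * (N:ℝ) - (N:ℝ) + 2) * (σ + 2)) = Y * ((m - 1) * (σ - 2)) := by
          linear_combination (-2) * e2
        exact mul_left_cancel₀ (ne_of_gt hYpos) e5
      have hLne : ((m - 1) * (σ - 2)) ≠ 0 := ne_of_gt hLpos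
      have h2 : a * k * Y = 1 := by
        rw [hA, div_mul_eq_mul_div, div_mul_eq_mul_div, div_eq_iff hLne]
        linear_combination hkey
      have hYv : Y = 1 / (a * k) := by
        rw [eq_div_iff hAk]
        linear_combination h2
      have h2akne : 2 * a * k ≠ 0 :=
        ne_of_gt (mul_pos (mul_pos two_pos hApos) hkpos)
      have hXv : X = (m - 1) / (2 * a * k) := by
        rw [eq_div_iff h2akne]
        linear_combination (m - 1) * h2 - a * k * e1'
      rw [Prod.mk.injEq, Prod.mk.injEq]
      exact ⟨hXv, hYv, hZ0⟩
  · rintro (hP | ⟨l, hl1, hl2, hP⟩)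
    · rw [Prod.mk.injEq, Prod.mk.injEq] at hP
      obtain ⟨hX', hY', hZ'⟩ := hP
      subst hX' hY' hZ'
      have hm1' : m - 1 ≠ 0 := ne_of_gt hm1
      have hs2' : σ - 2 ≠ 0 := by linarith
      have hσp' : σ + 2 ≠ 0 := ne_of_gt hσp
      have hkne' : m * (N:ℝ) - (N:ℝ) + 2 ≠ 0 := hk_def ▸ hkne
      refine ⟨?_, ?_, ?_⟩
      · exact aux1 m a k hane hkne
      · rw [hr, hA, hk_def]
        exact aux2 m σ (N:ℝ) hσp' hm1' hs2' hkne'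
      · ring
    · rw [Prod.mk.injEq, Prod.mk.injEq] at hP
      obtain ⟨hX', hY', hZ'⟩ := hP
      subst hX' hY' hZ'
      refine ⟨by ring, by ring, ?_⟩
      have h0 : m + p - 2 = 0 := by linarith
      rw [h0]; ring
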